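/- Let k be a field of characteristic zero with α, β ∈ k, β ≠ 0, satisfying α² + β² = -3. The subgroup of GL₄(k) generated by the matrices R and S above (with R³ = S⁴ = I, SRS⁻¹ = R⁻¹) has order exactly 12; i.e., the representation of Dic₁₂ is faithful. -/

import Mathlib

private theorem mulfour {k : Type*} [CommRing k] (a b c d e f g h i j l m n o p q
    a' b' c' d' e' f' g' h' i' j' l' m' n' o' p' q' : k) :
    !![a,b,c,d; e,f,g,h; i,j,l,m; n,o,p,q] *
      !![a',b',c',d'; e',f',g',h'; i',j',l',m'; n',o',p',q'] =
    !![a*a'+b*e'+c*i'+d*n', a*b'+b*f'+c*j'+d*o', a*c'+b*g'+c*l'+d*p', a*d'+b*h'+c*m'+d*q';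
       e*a'+f*e'+g*i'+h*n', e*b'+f*f'+g*j'+h*o', e*c'+f*g'+g*l'+h*p', e*d'+f*h'+g*m'+h*q';
       i*a'+j*e'+l*i'+m*n', i*b'+j*f'+l*j'+m*o', i*c'+j*g'+l*l'+m*p', i*d'+j*h'+l*m'+m*q';
       n*a'+o*e'+p*i'+q*n', n*b'+o*f'+p*j'+q*o', n*c'+o*g'+p*l'+q*p', n*d'+o*h'+p*m'+q*q'] := by
  ext x y
  fin_cases x <;> fin_cases y <;> simp [Matrix.mul_apply, Fin.sum_univ_four]

private theorem onefour {k : Type*} [CommRing k] :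
    (1 : Matrix (Fin 4) (Fin 4) k) = !![1,0,0,0; 0,1,0,0; 0,0,1,0; 0,0,0,1] := by
  ext x y
  fin_cases x <;> fin_cases y <;> rfl

set_option maxHeartbeats 2000000 in
/-- Let `k` be a field of characteristic zero with `α, β ∈ k`, `β ≠ 0`, satisfying
`α² + β² = -3`.  The subgroup of `GL₄(k)` generated by the matrices `R` and `S` below
has order exactly 12; i.e. the representation of `Dic₁₂` given by `r ↦ R, s ↦ S`
is faithful. -/
theorem stmt8 (k : Type*) [Field k] [CharZero k]
    (α β : k) (hβ : β ≠ 0) (h : α ^ 2 + β ^ 2 = -3)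
    (R S : (Matrix (Fin 4) (Fin 4) k)ˣ)
    (hR : (R : Matrix (Fin 4) (Fin 4) k) =
      !![0, -1, 0, 0; 1, -1, 0, 0; 0, 0, 0, -1; 0, 0, 1, -1])
    (hS : (S : Matrix (Fin 4) (Fin 4) k) =
      !![0, 1, 0, 0; 1, 0, 0, 0;
        0, 0, (α - 1) / β, (-α - 1) / β; 0, 0, -2 / β, (-α + 1) / β]) :
    Nat.card (Subgroup.closure ({R, S} : Set (Matrix (Fin 4) (Fin 4) k)ˣ)) = 12 := by
  -- matrix value of R^2
  have hR2 : ((R ^ 2 : _ˣ) : Matrix (Fin 4) (Fin 4) k) =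
      !![-1, 1, 0, 0; -1, 0, 0, 0; 0, 0, -1, 1; 0, 0, -1, 0] := by
    rw [Units.val_pow_eq_pow_val, hR, pow_two, mulfour]
    norm_num
  -- matrix value of S^2
  have hS2 : ((S ^ 2 : _ˣ) : Matrix (Fin 4) (Fin 4) k) =
      !![1, 0, 0, 0; 0, 1, 0, 0; 0, 0, -1, 0; 0, 0, 0, -1] := by
    rw [Units.val_pow_eq_pow_val, hS, pow_two, mulfour]
    ext i j
    fin_cases i <;> fin_cases j <;>
      simp only [Matrix.cons_val', Matrix.cons_val_zero, Matrix.cons_val_one, Matrix.head_cons,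
      Matrix.empty_val', Matrix.cons_val_fin_one, Matrix.head_fin_const, Matrix.cons_val_two,
      Matrix.cons_val_three, Matrix.tail_cons, Matrix.of_apply, Fin.reduceFinMk, Matrix.cons_val] <;>
      field_simp <;>
      first
      | ring1
      | linear_combination h
      | linear_combination β ^ 2 * h
  -- matrix value of S^3
  have hS3 : ((S ^ 3 : _ˣ) : Matrix (Fin 4) (Fin 4) k) =
      !![0, 1, 0, 0; 1, 0, 0, 0;
        0, 0, -((α - 1) / β), -((-α - 1) / β); 0, 0, -(-2 / β), -((-α + 1) / β)] := by
    rw [pow_succ, Units.val_mul, hS2, hS, mulfour]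
    norm_num
  -- R has order 3
  have hR3 : R ^ 3 = 1 := by
    ext : 1
    rw [pow_succ, Units.val_mul, hR2, hR, mulfour, Units.val_one, onefour]
    norm_num
  -- S has order 4
  have hS4 : S ^ 4 = 1 := by
    ext : 1
    have h4 : S ^ 4 = S ^ 2 * S ^ 2 := by rw [← pow_add]
    rw [h4, Units.val_mul, hS2, mulfour, Units.val_one, onefour]
    norm_num
  -- the braiding relation
  have hSR : S * R = R ^ 2 * S := by
    ext : 1
    rw [Units.val_mul, Units.val_mul, hR2, hR, hS, mulfour, mulfour]
    ext i j
    fin_cases i <;> fin_cases j <;>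
      simp only [Matrix.cons_val', Matrix.cons_val_zero, Matrix.cons_val_one, Matrix.head_cons,
      Matrix.empty_val', Matrix.cons_val_fin_one, Matrix.head_fin_const, Matrix.cons_val_two,
      Matrix.cons_val_three, Matrix.tail_cons, Matrix.of_apply] <;>
      field_simp <;> ring
  -- commutation of powers
  have hSRn : ∀ n : ℕ, S * R ^ n = R ^ (2 * n) * S := by
    intro n
    induction n with
    | zero => simp
    | succ n ih =>
      calc S * R ^ (n + 1) = (S * R ^ n) * R := by rw [pow_succ, ← mul_assoc]
        _ = R ^ (2 * n) * (S * R) := by rw [ih, mul_assoc]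
        _ = R ^ (2 * n) * R ^ 2 * S := by rw [hSR, mul_assoc]
        _ = R ^ (2 * (n + 1)) * S := by rw [← pow_add, Nat.mul_succ]
  have hSbR : ∀ b c : ℕ, S ^ b * R ^ c = R ^ (2 ^ b * c) * S ^ b := by
    intro b
    induction b with
    | zero => simp
    | succ b ih =>
      intro c
      calc S ^ (b + 1) * R ^ c = S ^ b * (S * R ^ c) := by rw [pow_succ, mul_assoc]
        _ = S ^ b * R ^ (2 * c) * S := by rw [hSRn, mul_assoc]
        _ = R ^ (2 ^ b * (2 * c)) * S ^ b * S := by rw [ih]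
        _ = R ^ (2 ^ (b + 1) * c) * S ^ (b + 1) := by
            rw [mul_assoc, ← pow_succ, pow_succ 2]
            ring_nf
  -- normal form of a product
  have hmul : ∀ a b c d : ℕ, (R ^ a * S ^ b) * (R ^ c * S ^ d) =
      R ^ ((a + 2 ^ b * c) % 3) * S ^ ((b + d) % 4) := by
    intro a b c d
    calc (R ^ a * S ^ b) * (R ^ c * S ^ d) = R ^ a * (S ^ b * R ^ c) * S ^ d := by
          simp only [mul_assoc]
      _ = R ^ a * (R ^ (2 ^ b * c) * S ^ b) * S ^ d := by rw [hSbR]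
      _ = R ^ (a + 2 ^ b * c) * S ^ (b + d) := by simp only [pow_add, mul_assoc]
      _ = R ^ ((a + 2 ^ b * c) % 3) * S ^ ((b + d) % 4) := by
          rw [pow_eq_pow_mod _ hR3, pow_eq_pow_mod _ hS4]
  -- every element of the closure is of the form R^a * S^b
  have key : ∀ x ∈ Subgroup.closure ({R, S} : Set (Matrix (Fin 4) (Fin 4) k)ˣ),
      ∃ a b : ℕ, a < 3 ∧ b < 4 ∧ x = R ^ a * S ^ b := by
    intro x hx
    induction hx using Subgroup.closure_induction with
    | mem y hy =>
      simp only [Set.mem_insert_iff, Set.mem_singleton_iff] at hy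
      rcases hy with rfl | rfl
      · exact ⟨1, 0, by norm_num, by norm_num, by simp⟩
      · exact ⟨0, 1, by norm_num, by norm_num, by simp⟩
    | one => exact ⟨0, 0, by norm_num, by norm_num, by simp⟩
    | mul x y _ _ hx hy =>
      obtain ⟨a, b, ha, hb, rfl⟩ := hx
      obtain ⟨c, d, hc, hd, rfl⟩ := hy
      exact ⟨(a + 2 ^ b * c) % 3, (b + d) % 4, Nat.mod_lt _ (by norm_num),
        Nat.mod_lt _ (by norm_num), hmul a b c d⟩
    | inv x _ hx =>
      obtain ⟨a, b, ha, hb, rfl⟩ := hx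
      have hinv : (R ^ a * S ^ b)⁻¹ = S ^ (4 - b) * R ^ (3 - a) := by
        apply inv_eq_of_mul_eq_one_right
        calc (R ^ a * S ^ b) * (S ^ (4 - b) * R ^ (3 - a))
            = R ^ a * (S ^ (b + (4 - b)) * R ^ (3 - a)) := by simp only [pow_add, mul_assoc]
          _ = R ^ a * (S ^ 4 * R ^ (3 - a)) := by rw [Nat.add_sub_cancel' (by omega)]
          _ = R ^ (a + (3 - a)) := by rw [hS4, one_mul, pow_add]
          _ = 1 := by rw [Nat.add_sub_cancel' (by omega), hR3]
      have hrw : S ^ (4 - b) * R ^ (3 - a) = (R ^ 0 * S ^ (4 - b)) * (R ^ (3 - a) * S ^ 0) := by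
        rw [pow_zero, pow_zero, one_mul, mul_one]
      rw [hinv, hrw, hmul]
      exact ⟨_, _, Nat.mod_lt _ (by norm_num), Nat.mod_lt _ (by norm_num), rfl⟩
  -- the core distinctness fact: R^e = S^f forces e = f = 0
  have hcore : ∀ e f : ℕ, e < 3 → f < 4 → R ^ e = S ^ f → e = 0 ∧ f = 0 := by
    intro e f he hf heq
    have hval := congrArg (Units.val) heq
    interval_cases e <;> interval_cases f <;>
      first
      | exact ⟨rfl, rfl⟩
      | (exfalso
         simp only [pow_zero, pow_one, Units.val_one, hR2, hS2, hS3, hR, hS, onefour] at hval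
         rw [← Matrix.ext_iff] at hval
         have h00 := hval 0 0
         have h01 := hval 0 1
         have h22 := hval 2 2
         all_goals simp at h00
         all_goals simp at h01
         all_goals simp at h22
         all_goals norm_num at *)
  -- injectivity of the normal form
  have hinj : ∀ a b c d : ℕ, a < 3 → b < 4 → c < 3 → d < 4 →
      R ^ a * S ^ b = R ^ c * S ^ d → a = c ∧ b = d := by
    intro a b c d ha hb hc hd heq
    have l1 : R ^ (3 - c) * (R ^ a * S ^ b) * S ^ (4 - b) = R ^ ((3 - c) + a) := by
      calc R ^ (3 - c) * (R ^ a * S ^ b) * S ^ (4 - b)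
          = R ^ ((3 - c) + a) * S ^ (b + (4 - b)) := by simp only [pow_add, mul_assoc]
        _ = R ^ ((3 - c) + a) * S ^ 4 := by rw [Nat.add_sub_cancel' (by omega)]
        _ = R ^ ((3 - c) + a) := by rw [hS4, mul_one]
    have l2 : R ^ (3 - c) * (R ^ c * S ^ d) * S ^ (4 - b) = S ^ (d + (4 - b)) := by
      calc R ^ (3 - c) * (R ^ c * S ^ d) * S ^ (4 - b)
          = R ^ ((3 - c) + c) * S ^ (d + (4 - b)) := by simp only [pow_add, mul_assoc]
        _ = R ^ 3 * S ^ (d + (4 - b)) := by rw [Nat.sub_add_cancel (by omega)]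
        _ = S ^ (d + (4 - b)) := by rw [hR3, one_mul]
    have h1 : R ^ (((3 - c) + a) % 3) = S ^ ((d + (4 - b)) % 4) := by
      rw [← pow_eq_pow_mod _ hR3, ← pow_eq_pow_mod _ hS4, ← l1, ← l2, heq]
    have := hcore _ _ (Nat.mod_lt _ (by norm_num)) (Nat.mod_lt _ (by norm_num)) h1
    omega
  -- the bijection
  let f : Fin 3 × Fin 4 → (Subgroup.closure ({R, S} : Set (Matrix (Fin 4) (Fin 4) k)ˣ)) :=
    fun p => ⟨R ^ (p.1 : ℕ) * S ^ (p.2 : ℕ),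
      mul_mem (pow_mem (Subgroup.subset_closure (by simp)) _)
        (pow_mem (Subgroup.subset_closure (by simp)) _)⟩
  have hbij : Function.Bijective f := by
    constructor
    · rintro ⟨a, b⟩ ⟨c, d⟩ hfe
      have : R ^ (a : ℕ) * S ^ (b : ℕ) = R ^ (c : ℕ) * S ^ (d : ℕ) :=
        congrArg Subtype.val hfe
      obtain ⟨h1, h2⟩ := hinj _ _ _ _ a.isLt b.isLt c.isLt d.isLt this
      exact Prod.ext (Fin.ext h1) (Fin.ext h2)
    · rintro ⟨x, hx⟩
      obtain ⟨a, b, ha, hb, rfl⟩ := key x hx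
      exact ⟨(⟨a, ha⟩, ⟨b, hb⟩), rfl⟩
  rw [← Nat.card_eq_of_bijective f hbij]
  simp
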